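/- For every s > 0, every n ∈ ℕ and all θ, θ* > 0, the following two Gamma-averaged reservoir input terms are equal (all integrals converging absolutely): ∫₀^∞ γ_θ(x) ( ∫₀^∞ u^{−1} e^{−u} [ (x + u θ*)^n − x^n ] du ) dx = ∫₀^∞ ∫₀^∞ γ_θ(x) γ_{θ*}(y) ( ∫₀¹ u^{−1}(1−u)^{2s−1} [ (x + u y)^n − x^n ] du ) dy dx, where γ_θ(x) = x^{2s−1} e^{−x/θ}/(θ^{2s} Γ(2s)). Consequently, the two reservoir generators of the generalized harmonic model — the one with deterministic input L^{(1)}: f ↦ ∫₀¹ u^{−1}(1−u)^{2s−1}(f((1−u)x)−f(x))du + ∫₀^∞ u^{−1}e^{−u}(f(x+uθ*)−f(x))du, and the one with Gamma-sampled input L^{(2)}: f ↦ ∫₀¹ u^{−1}(1−u)^{2s−1}(f((1−u)x)−f(x))du + ∫₀^∞ γ_{θ*}(y) ∫₀¹ u^{−1}(1−u)^{2s−1}(f(x+uy)−f(x))du dy — have equal Gamma-averages on all monomials: ∫ γ_θ(x) (L^{(1)}f_n)(x) dx = ∫ γ_θ(x) (L^{(2)}f_n)(x) dx for f_n(x) =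 x^n. -/

import Mathlib

open MeasureTheory Real Set

/-- The Gamma(shape 2s, scale θ) density on (0,∞). -/
noncomputable def gammaDens (s θ x : ℝ) : ℝ :=
  x ^ (2 * s - 1) * Real.exp (-x / θ) / (θ ^ (2 * s) * Real.Gamma (2 * s))


lemma expKer_int (m : ℕ) :
    IntegrableOn (fun u : ℝ => u ^ m * Real.exp (-u)) (Set.Ioi 0) volume := by
  have h := integrableOn_rpow_mul_exp_neg_mul_rpow (p := 1) (s := (m : ℝ)) (b := 1)
    (neg_one_lt_zero.trans_le (Nat.cast_nonneg m)) one_pos one_pos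
  refine h.congr_fun (fun x hx => ?_) measurableSet_Ioi
  beta_reduce
  rw [rpow_natCast, rpow_one, neg_one_mul]

lemma expKer_val (m : ℕ) :
    ∫ u in Set.Ioi (0 : ℝ), u ^ m * Real.exp (-u) = Real.Gamma ((m : ℝ) + 1) := by
  have h := integral_rpow_mul_exp_neg_mul_Ioi (a := (m : ℝ) + 1) (r := 1)
    (by positivity) one_pos
  simp only [add_sub_cancel_right, one_mul] at h
  rw [show ((1:ℝ)/1) = 1 by norm_num, Real.one_rpow, one_mul] at h
  rw [← h]
  refine setIntegral_congr_fun measurableSet_Ioi (fun x hx => ?_)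
  rw [rpow_natCast]

lemma betaKer_int (m : ℕ) {b : ℝ} (hb : 0 < b) :
    IntegrableOn (fun u : ℝ => u ^ m * (1 - u) ^ (b - 1)) (Set.Ioo 0 1) volume := by
  have h1 : IntervalIntegrable (fun x : ℝ => x ^ (b - 1)) volume 0 1 :=
    intervalIntegral.intervalIntegrable_rpow' (by linarith)
  have h2 := (h1.comp_sub_left 1).symm
  norm_num at h2
  have h3 : IntegrableOn (fun x : ℝ => (1 - x) ^ (b - 1)) (Set.Ioo 0 1) volume :=
    (intervalIntegrable_iff_integrableOn_Ioo_of_le (by norm_num)).mp h2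
  refine h3.bdd_mul (f := fun u : ℝ => u ^ m) (c := 1)
    (measurable_id.pow_const m).aestronglyMeasurable ?_
  refine (ae_restrict_iff' measurableSet_Ioo).mpr (ae_of_all _ fun x hx => ?_)
  rw [Real.norm_eq_abs, abs_of_nonneg (pow_nonneg hx.1.le m)]
  exact pow_le_one₀ hx.1.le hx.2.le

lemma betaKer_val (m : ℕ) {b : ℝ} (hb : 0 < b) :
    ∫ u in Set.Ioo (0 : ℝ) 1, u ^ m * (1 - u) ^ (b - 1)
      = Real.Gamma ((m : ℝ) + 1) * Real.Gamma b / Real.Gamma ((m : ℝ) + 1 + b) := by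
  have hu : 0 < ((((m : ℝ) + 1 : ℝ)) : ℂ).re := by
    simp only [Complex.ofReal_re]; positivity
  have hv : 0 < ((b : ℝ) : ℂ).re := by simp only [Complex.ofReal_re]; exact hb
  have key := Complex.Gamma_mul_Gamma_eq_betaIntegral hu hv
  have hbeta : Complex.betaIntegral (((m : ℝ) + 1 : ℝ) : ℂ) ((b : ℝ) : ℂ)
      = ((∫ u in Set.Ioo (0 : ℝ) 1, u ^ m * (1 - u) ^ (b - 1) : ℝ) : ℂ) := by
    rw [Complex.betaIntegral]
    rw [show (∫ u in Set.Ioo (0 : ℝ) 1, u ^ m * (1 - u) ^ (b - 1))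
        = ∫ u in (0:ℝ)..1, u ^ m * (1 - u) ^ (b - 1) by
      rw [intervalIntegral.integral_of_le (by norm_num), integral_Ioc_eq_integral_Ioo]]
    rw [← intervalIntegral.integral_ofReal]
    refine intervalIntegral.integral_congr (fun x hx => ?_)
    rw [Set.uIcc_of_le (by norm_num : (0:ℝ) ≤ 1)] at hx
    have h1 : ((((m : ℝ) + 1 : ℝ)) : ℂ) - 1 = (m : ℂ) := by push_cast; ring
    rw [h1, Complex.cpow_natCast]
    have h2 : (1 - (x : ℂ)) = (((1 - x : ℝ)) : ℂ) := by push_cast; ring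
    have h3 : ((b : ℝ) : ℂ) - 1 = (((b - 1 : ℝ)) : ℂ) := by push_cast; ring
    rw [h2, h3, ← Complex.ofReal_cpow (by linarith [hx.2] : (0:ℝ) ≤ 1 - x)]
    push_cast
    ring
  rw [hbeta, Complex.Gamma_ofReal, Complex.Gamma_ofReal,
    show ((((m : ℝ) + 1 : ℝ)) : ℂ) + ((b : ℝ) : ℂ) = (((m : ℝ) + 1 + b : ℝ) : ℂ) by push_cast; ring,
    Complex.Gamma_ofReal, ← Complex.ofReal_mul, ← Complex.ofReal_mul] at key
  have hre := Complex.ofReal_inj.mp key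
  have hne : Real.Gamma ((m : ℝ) + 1 + b) ≠ 0 :=
    (Real.Gamma_pos_of_pos (by positivity)).ne'
  rw [eq_div_iff hne]
  linarith [hre, mul_comm (Real.Gamma ((m : ℝ) + 1 + b)) (∫ u in Set.Ioo (0 : ℝ) 1, u ^ m * (1 - u) ^ (b - 1))]


lemma gmom_int {s c : ℝ} (hs : 0 < s) (hc : 0 < c) (j : ℕ) :
    IntegrableOn (fun y : ℝ => gammaDens s c y * y ^ j) (Set.Ioi 0) volume := by
  have h := integrableOn_rpow_mul_exp_neg_mul_rpow (p := 1) (s := 2 * s + (j : ℝ) - 1)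
    (b := 1 / c) (by have := Nat.cast_nonneg (α := ℝ) j; linarith) one_pos (by positivity)
  have h' : IntegrableOn (fun y : ℝ => (c ^ (2 * s) * Real.Gamma (2 * s))⁻¹ *
      (y ^ (2 * s + (j : ℝ) - 1) * Real.exp (-(1 / c) * y ^ (1:ℝ)))) (Set.Ioi 0) volume :=
    h.const_mul _
  refine h'.congr_fun (fun y hy => ?_) measurableSet_Ioi
  have hy' : (0:ℝ) < y := hy
  beta_reduce
  rw [rpow_one, show 2 * s + (j : ℝ) - 1 = (2 * s - 1) + (j : ℝ) by ring,
    rpow_add hy', rpow_natCast, show -(1 / c) * y = -y / c by ring]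
  unfold gammaDens
  ring

lemma gmom_val {s c : ℝ} (hs : 0 < s) (hc : 0 < c) (j : ℕ) :
    ∫ y in Set.Ioi (0 : ℝ), gammaDens s c y * y ^ j
      = c ^ j * Real.Gamma (2 * s + j) / Real.Gamma (2 * s) := by
  have heq : Set.EqOn (fun y : ℝ => gammaDens s c y * y ^ j)
      (fun y : ℝ => (c ^ (2 * s) * Real.Gamma (2 * s))⁻¹ *
        (y ^ (2 * s + (j : ℝ) - 1) * Real.exp (-(1 / c * y)))) (Set.Ioi 0) := by
    intro y hy
    have hy' : (0:ℝ) < y := hy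
    simp only
    rw [show 2 * s + (j : ℝ) - 1 = (2 * s - 1) + (j : ℝ) by ring,
      rpow_add hy', rpow_natCast, show -(1 / c * y) = -y / c by ring]
    unfold gammaDens
    ring
  rw [setIntegral_congr_fun measurableSet_Ioi heq, integral_const_mul,
    integral_rpow_mul_exp_neg_mul_Ioi (by positivity) (by positivity),
    one_div_one_div, show 2 * s + (j : ℝ) = 2 * s + (j : ℝ) from rfl]
  rw [show c ^ (2 * s + (j : ℝ)) = c ^ (2 * s) * c ^ (j : ℝ) from rpow_add hc _ _,
    rpow_natCast]
  have h1 : c ^ (2 * s) ≠ 0 := (rpow_pos_of_pos hc _).ne'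
  have h2 : Real.Gamma (2 * s) ≠ 0 := (Real.Gamma_pos_of_pos (by linarith)).ne'
  field_simp

lemma expand (n : ℕ) (x c u : ℝ) (hu : u ≠ 0) :
    u⁻¹ * ((x + u * c) ^ n - x ^ n)
      = ∑ k ∈ Finset.range n,
          (n.choose k : ℝ) * x ^ k * c ^ (n - k) * u ^ (n - k - 1) := by
  rw [add_pow, Finset.sum_range_succ]
  simp only [Nat.sub_self, pow_zero, Nat.choose_self, Nat.cast_one, mul_one, one_mul]
  rw [add_sub_cancel_right, Finset.mul_sum]
  refine Finset.sum_congr rfl fun k hk => ?_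
  have hkn : k < n := Finset.mem_range.mp hk
  have h1 : n - k = (n - k - 1) + 1 := by omega
  rw [h1, Nat.add_sub_cancel, mul_pow, pow_succ]
  field_simp

lemma I1_int (n : ℕ) (θs x : ℝ) :
    IntegrableOn (fun u : ℝ => u⁻¹ * Real.exp (-u) * ((x + u * θs) ^ n - x ^ n))
      (Set.Ioi 0) volume := by
  have hin : IntegrableOn (fun u : ℝ => ∑ k ∈ Finset.range n,
      (n.choose k : ℝ) * x ^ k * θs ^ (n - k) * (u ^ (n - k - 1) * Real.exp (-u)))
      (Set.Ioi 0) volume :=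
    integrable_finset_sum _ fun k _ => (expKer_int (n - k - 1)).const_mul _
  refine hin.congr_fun (fun u hu => ?_) measurableSet_Ioi
  have hu' : u ≠ 0 := ne_of_gt hu
  rw [show u⁻¹ * Real.exp (-u) * ((x + u * θs) ^ n - x ^ n)
      = (u⁻¹ * ((x + u * θs) ^ n - x ^ n)) * Real.exp (-u) by ring,
    expand n x θs u hu', Finset.sum_mul]
  exact Finset.sum_congr rfl fun k _ => by ring

lemma I1_val (n : ℕ) (θs x : ℝ) :
    (∫ u in Set.Ioi (0:ℝ), u⁻¹ * Real.exp (-u) * ((x + u * θs) ^ n - x ^ n))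
      = ∑ k ∈ Finset.range n, (n.choose k : ℝ) * x ^ k * θs ^ (n - k) *
          Real.Gamma (((n - k - 1 : ℕ) : ℝ) + 1) := by
  have heq : Set.EqOn (fun u : ℝ => u⁻¹ * Real.exp (-u) * ((x + u * θs) ^ n - x ^ n))
      (fun u : ℝ => ∑ k ∈ Finset.range n,
        (n.choose k : ℝ) * x ^ k * θs ^ (n - k) * (u ^ (n - k - 1) * Real.exp (-u)))
      (Set.Ioi 0) := by
    intro u hu
    have hu' : u ≠ 0 := ne_of_gt hu
    simp only
    rw [show u⁻¹ * Real.exp (-u) * ((x + u * θs) ^ n - x ^ n)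
        = (u⁻¹ * ((x + u * θs) ^ n - x ^ n)) * Real.exp (-u) by ring,
      expand n x θs u hu', Finset.sum_mul]
    exact Finset.sum_congr rfl fun k _ => by ring
  rw [setIntegral_congr_fun measurableSet_Ioi heq,
    integral_finset_sum _ fun k _ => (expKer_int (n - k - 1)).const_mul _]
  exact Finset.sum_congr rfl fun k _ => by rw [integral_const_mul, expKer_val]

lemma I2_int {s : ℝ} (hs : 0 < s) (n : ℕ) (x y : ℝ) :
    IntegrableOn (fun u : ℝ => u⁻¹ * (1 - u) ^ (2 * s - 1) * ((x + u * y) ^ n - x ^ n))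
      (Set.Ioo 0 1) volume := by
  have hin : IntegrableOn (fun u : ℝ => ∑ k ∈ Finset.range n,
      (n.choose k : ℝ) * x ^ k * y ^ (n - k) * (u ^ (n - k - 1) * (1 - u) ^ (2 * s - 1)))
      (Set.Ioo 0 1) volume :=
    integrable_finset_sum _ fun k _ => (betaKer_int (n - k - 1) (by linarith)).const_mul _
  refine hin.congr_fun (fun u hu => ?_) measurableSet_Ioo
  have hu' : u ≠ 0 := ne_of_gt hu.1
  rw [show u⁻¹ * (1 - u) ^ (2 * s - 1) * ((x + u * y) ^ n - x ^ n)
      = (u⁻¹ * ((x + u * y) ^ n - x ^ n)) * (1 - u) ^ (2 * s - 1) by ring,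
    expand n x y u hu', Finset.sum_mul]
  exact Finset.sum_congr rfl fun k _ => by ring

lemma I2_val {s : ℝ} (hs : 0 < s) (n : ℕ) (x y : ℝ) :
    (∫ u in Set.Ioo (0:ℝ) 1, u⁻¹ * (1 - u) ^ (2 * s - 1) * ((x + u * y) ^ n - x ^ n))
      = ∑ k ∈ Finset.range n, (n.choose k : ℝ) * x ^ k * y ^ (n - k) *
          (Real.Gamma (((n - k - 1 : ℕ) : ℝ) + 1) * Real.Gamma (2 * s) /
            Real.Gamma (((n - k - 1 : ℕ) : ℝ) + 1 + 2 * s)) := by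
  have heq : Set.EqOn (fun u : ℝ => u⁻¹ * (1 - u) ^ (2 * s - 1) * ((x + u * y) ^ n - x ^ n))
      (fun u : ℝ => ∑ k ∈ Finset.range n,
        (n.choose k : ℝ) * x ^ k * y ^ (n - k) * (u ^ (n - k - 1) * (1 - u) ^ (2 * s - 1)))
      (Set.Ioo 0 1) := by
    intro u hu
    have hu' : u ≠ 0 := ne_of_gt hu.1
    simp only
    rw [show u⁻¹ * (1 - u) ^ (2 * s - 1) * ((x + u * y) ^ n - x ^ n)
        = (u⁻¹ * ((x + u * y) ^ n - x ^ n)) * (1 - u) ^ (2 * s - 1) by ring,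
      expand n x y u hu', Finset.sum_mul]
    exact Finset.sum_congr rfl fun k _ => by ring
  rw [setIntegral_congr_fun measurableSet_Ioo heq,
    integral_finset_sum _ fun k _ => (betaKer_int (n - k - 1) (by linarith)).const_mul _]
  exact Finset.sum_congr rfl fun k _ => by
    rw [integral_const_mul, betaKer_val _ (by linarith : (0:ℝ) < 2 * s)]

lemma J_int {s θs : ℝ} (hs : 0 < s) (hθs : 0 < θs) (n : ℕ) (x : ℝ) :
    IntegrableOn (fun y : ℝ => gammaDens s θs y *
      ∫ u in Set.Ioo (0:ℝ) 1, u⁻¹ * (1 - u) ^ (2 * s - 1) * ((x + u * y) ^ n - x ^ n))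
      (Set.Ioi 0) volume := by
  have hin : IntegrableOn (fun y : ℝ => ∑ k ∈ Finset.range n,
      ((n.choose k : ℝ) * x ^ k * (Real.Gamma (((n - k - 1 : ℕ) : ℝ) + 1) * Real.Gamma (2 * s) /
        Real.Gamma (((n - k - 1 : ℕ) : ℝ) + 1 + 2 * s))) * (gammaDens s θs y * y ^ (n - k)))
      (Set.Ioi 0) volume :=
    integrable_finset_sum _ fun k _ => (gmom_int hs hθs (n - k)).const_mul _
  refine hin.congr_fun (fun y _ => ?_) measurableSet_Ioi
  rw [I2_val hs, Finset.mul_sum]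
  exact Finset.sum_congr rfl fun k _ => by ring

lemma J_val {s θs : ℝ} (hs : 0 < s) (hθs : 0 < θs) (n : ℕ) (x : ℝ) :
    (∫ y in Set.Ioi (0:ℝ), gammaDens s θs y *
      ∫ u in Set.Ioo (0:ℝ) 1, u⁻¹ * (1 - u) ^ (2 * s - 1) * ((x + u * y) ^ n - x ^ n))
      = ∑ k ∈ Finset.range n,
          ((n.choose k : ℝ) * x ^ k * (Real.Gamma (((n - k - 1 : ℕ) : ℝ) + 1) * Real.Gamma (2 * s) /
            Real.Gamma (((n - k - 1 : ℕ) : ℝ) + 1 + 2 * s))) *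
          (θs ^ (n - k) * Real.Gamma (2 * s + (n - k : ℕ)) / Real.Gamma (2 * s)) := by
  have heq : Set.EqOn (fun y : ℝ => gammaDens s θs y *
      ∫ u in Set.Ioo (0:ℝ) 1, u⁻¹ * (1 - u) ^ (2 * s - 1) * ((x + u * y) ^ n - x ^ n))
      (fun y : ℝ => ∑ k ∈ Finset.range n,
        ((n.choose k : ℝ) * x ^ k * (Real.Gamma (((n - k - 1 : ℕ) : ℝ) + 1) * Real.Gamma (2 * s) /
          Real.Gamma (((n - k - 1 : ℕ) : ℝ) + 1 + 2 * s))) * (gammaDens s θs y * y ^ (n - k)))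
      (Set.Ioi 0) := by
    intro y _
    simp only
    rw [I2_val hs, Finset.mul_sum]
    exact Finset.sum_congr rfl fun k _ => by ring
  rw [setIntegral_congr_fun measurableSet_Ioi heq,
    integral_finset_sum _ fun k _ => (gmom_int hs hθs (n - k)).const_mul _]
  exact Finset.sum_congr rfl fun k _ => by rw [integral_const_mul, gmom_val hs hθs]

lemma inner_eq {s θs : ℝ} (hs : 0 < s) (hθs : 0 < θs) (n : ℕ) (x : ℝ) :
    (∫ u in Set.Ioi (0:ℝ), u⁻¹ * Real.exp (-u) * ((x + u * θs) ^ n - x ^ n))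
      = ∫ y in Set.Ioi (0:ℝ), gammaDens s θs y *
          ∫ u in Set.Ioo (0:ℝ) 1, u⁻¹ * (1 - u) ^ (2 * s - 1) * ((x + u * y) ^ n - x ^ n) := by
  rw [I1_val, J_val hs hθs]
  refine Finset.sum_congr rfl fun k hk => ?_
  have hkn : k < n := Finset.mem_range.mp hk
  have hcast : ((n - k - 1 : ℕ) : ℝ) + 1 = ((n - k : ℕ) : ℝ) := by
    have : (n - k - 1 : ℕ) + 1 = n - k := by omega
    exact_mod_cast congrArg (Nat.cast : ℕ → ℝ) this
  have h2s : Real.Gamma (2 * s) ≠ 0 := (Real.Gamma_pos_of_pos (by linarith)).ne'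
  have hden : Real.Gamma (((n - k - 1 : ℕ) : ℝ) + 1 + 2 * s) ≠ 0 :=
    (Real.Gamma_pos_of_pos (by positivity)).ne'
  have harg : 2 * s + ((n - k : ℕ) : ℝ) = ((n - k - 1 : ℕ) : ℝ) + 1 + 2 * s := by
    rw [← hcast]; ring
  rw [harg]
  field_simp

/-- The two alternative reservoir input terms of the generalized harmonic model —
deterministic input `θ*` vs. Gamma-sampled input — have equal Gamma-averages on all
monomials; consequently the two reservoir generators `L^{(1)}` and `L^{(2)}` have equal
Gamma-averages on all monomials. -/
theorem gamma_averaged_reservoirs_agree (s : ℝ) (hs : 0 < s) (n : ℕ) (θ θs : ℝ)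
    (hθ : 0 < θ) (hθs : 0 < θs) :
    (∀ x : ℝ, 0 < x →
      IntegrableOn (fun u : ℝ => u⁻¹ * Real.exp (-u) * ((x + u * θs) ^ n - x ^ n))
        (Set.Ioi 0) volume) ∧
    (∀ x : ℝ, 0 < x → ∀ y : ℝ, 0 < y →
      IntegrableOn (fun u : ℝ => u⁻¹ * (1 - u) ^ (2 * s - 1) * ((x + u * y) ^ n - x ^ n))
        (Set.Ioo 0 1) volume) ∧
    IntegrableOn (fun x : ℝ => gammaDens s θ x *
        ∫ u in Set.Ioi (0:ℝ), u⁻¹ * Real.exp (-u) * ((x + u * θs) ^ n - x ^ n))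
      (Set.Ioi 0) volume ∧
    IntegrableOn (fun q : ℝ × ℝ => gammaDens s θ q.1 * gammaDens s θs q.2 *
        ∫ u in Set.Ioo (0:ℝ) 1,
          u⁻¹ * (1 - u) ^ (2 * s - 1) * ((q.1 + u * q.2) ^ n - q.1 ^ n))
      (Set.Ioi 0 ×ˢ Set.Ioi 0) volume ∧
    (∫ x in Set.Ioi (0:ℝ), gammaDens s θ x *
        ∫ u in Set.Ioi (0:ℝ), u⁻¹ * Real.exp (-u) * ((x + u * θs) ^ n - x ^ n))
      = (∫ x in Set.Ioi (0:ℝ), ∫ y in Set.Ioi (0:ℝ),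
          gammaDens s θ x * gammaDens s θs y *
            ∫ u in Set.Ioo (0:ℝ) 1,
              u⁻¹ * (1 - u) ^ (2 * s - 1) * ((x + u * y) ^ n - x ^ n)) ∧
    (∫ x in Set.Ioi (0:ℝ), gammaDens s θ x *
        ((∫ u in Set.Ioo (0:ℝ) 1,
            u⁻¹ * (1 - u) ^ (2 * s - 1) * (((1 - u) * x) ^ n - x ^ n)) +
         (∫ u in Set.Ioi (0:ℝ), u⁻¹ * Real.exp (-u) * ((x + u * θs) ^ n - x ^ n))))
      = ∫ x in Set.Ioi (0:ℝ), gammaDens s θ x *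
          ((∫ u in Set.Ioo (0:ℝ) 1,
              u⁻¹ * (1 - u) ^ (2 * s - 1) * (((1 - u) * x) ^ n - x ^ n)) +
           (∫ y in Set.Ioi (0:ℝ), gammaDens s θs y *
              ∫ u in Set.Ioo (0:ℝ) 1,
                u⁻¹ * (1 - u) ^ (2 * s - 1) * ((x + u * y) ^ n - x ^ n))) := by
  refine ⟨fun x _ => I1_int n θs x, fun x _ y _ => I2_int hs n x y, ?_, ?_, ?_, ?_⟩
  · have hin : IntegrableOn (fun x : ℝ => ∑ k ∈ Finset.range n,
        ((n.choose k : ℝ) * θs ^ (n - k) * Real.Gamma (((n - k - 1 : ℕ) : ℝ) + 1)) *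
          (gammaDens s θ x * x ^ k)) (Set.Ioi 0) volume :=
      integrable_finset_sum _ fun k _ => (gmom_int hs hθ k).const_mul _
    refine hin.congr_fun (fun x _ => ?_) measurableSet_Ioi
    rw [I1_val n θs x, Finset.mul_sum]
    exact Finset.sum_congr rfl fun k _ => by ring
  · have hsum : Integrable (fun q : ℝ × ℝ => ∑ k ∈ Finset.range n,
        ((n.choose k : ℝ) * (Real.Gamma (((n - k - 1 : ℕ) : ℝ) + 1) * Real.Gamma (2 * s) /
          Real.Gamma (((n - k - 1 : ℕ) : ℝ) + 1 + 2 * s))) *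
          ((gammaDens s θ q.1 * q.1 ^ k) * (gammaDens s θs q.2 * q.2 ^ (n - k))))
        ((volume.restrict (Set.Ioi 0)).prod (volume.restrict (Set.Ioi 0))) :=
      integrable_finset_sum _ fun k _ =>
        ((gmom_int hs hθ k).mul_prod (gmom_int hs hθs (n - k))).const_mul _
    rw [Measure.prod_restrict, ← Measure.volume_eq_prod] at hsum
    refine hsum.congr (ae_of_all _ fun q => ?_)
    simp only
    rw [I2_val hs n q.1 q.2, Finset.mul_sum]
    exact Finset.sum_congr rfl fun k _ => by ring
  · refine setIntegral_congr_fun measurableSet_Ioi (fun x _ => ?_)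
    rw [inner_eq hs hθs n x, ← integral_const_mul]
    exact setIntegral_congr_fun measurableSet_Ioi fun y _ => (mul_assoc _ _ _).symm
  · exact setIntegral_congr_fun measurableSet_Ioi fun x _ => by
      rw [inner_eq hs hθs n x]
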